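/- Let n ≥ 1 and let A be a symmetric n×n real matrix. Suppose there are constants 0 < m' ≤ M' such that m' ‖z‖² ≤ ⟨A.mulVec z, z⟩ ≤ M' ‖z‖² for all z ∈ ℝⁿ (Euclidean norm and inner product). Then the adjugate of A satisfies ((m')ⁿ / M') ‖z‖² ≤ ⟨(adjugate A).mulVec z, z⟩ ≤ ((M')ⁿ / m') ‖z‖² for all z ∈ ℝⁿ. -/

import Mathlib

open Matrix

lemma symm_dot_swap {n : ℕ} (A : Matrix (Fin n) (Fin n) ℝ) (hA : A.IsSymm)
    (x y : Fin n → ℝ) : A.mulVec x ⬝ᵥ y = x ⬝ᵥ A.mulVec y := by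
  rw [← vecMul_transpose, hA.eq, dotProduct_mulVec]

lemma psd_cauchy_schwarz {n : ℕ} (A : Matrix (Fin n) (Fin n) ℝ) (hA : A.IsSymm)
    (hpsd : ∀ x : Fin n → ℝ, 0 ≤ A.mulVec x ⬝ᵥ x) (x y : Fin n → ℝ) :
    (A.mulVec x ⬝ᵥ y) ^ 2 ≤ (A.mulVec x ⬝ᵥ x) * (A.mulVec y ⬝ᵥ y) := by
  have key : ∀ t : ℝ, 0 ≤ (A.mulVec y ⬝ᵥ y) * (t * t)
      + (2 * (A.mulVec x ⬝ᵥ y)) * t + (A.mulVec x ⬝ᵥ x) := by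
    intro t
    have h0 := hpsd (x + t • y)
    have hyx : A.mulVec y ⬝ᵥ x = A.mulVec x ⬝ᵥ y := by
      rw [symm_dot_swap A hA y x, dotProduct_comm]
    simp only [mulVec_add, mulVec_smul, add_dotProduct, smul_dotProduct, dotProduct_add,
      dotProduct_smul, smul_eq_mul] at h0
    rw [hyx] at h0; nlinarith [h0]
  have hd := discrim_le_zero key
  rw [discrim] at hd
  nlinarith [hd]

theorem adjugate_rayleigh_bounds (n : ℕ) (hn : 1 ≤ n)
    (A : Matrix (Fin n) (Fin n) ℝ) (hA : A.IsSymm)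
    (m' M' : ℝ) (hm : 0 < m') (hmM : m' ≤ M')
    (h : ∀ z : Fin n → ℝ,
      m' * (z ⬝ᵥ z) ≤ A.mulVec z ⬝ᵥ z ∧ A.mulVec z ⬝ᵥ z ≤ M' * (z ⬝ᵥ z)) :
    ∀ z : Fin n → ℝ,
      (m' ^ n / M') * (z ⬝ᵥ z) ≤ A.adjugate.mulVec z ⬝ᵥ z ∧
      A.adjugate.mulVec z ⬝ᵥ z ≤ (M' ^ n / m') * (z ⬝ᵥ z) := by
  have hM : (0:ℝ) < M' := lt_of_lt_of_le hm hmM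
  have hherm : A.IsHermitian := by
    rwa [Matrix.IsHermitian, conjTranspose_eq_transpose_of_trivial]
  have hdotnn : ∀ z : Fin n → ℝ, 0 ≤ z ⬝ᵥ z := fun z => by
    simpa [dotProduct] using Finset.sum_nonneg fun i _ => mul_self_nonneg (z i)
  have hpsd : ∀ x : Fin n → ℝ, 0 ≤ A.mulVec x ⬝ᵥ x := fun x =>
    le_trans (mul_nonneg hm.le (hdotnn x)) (h x).1
  -- eigenvalue bounds
  have heig : ∀ i, m' ≤ hherm.eigenvalues i ∧ hherm.eigenvalues i ≤ M' := by
    intro i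
    set v : Fin n → ℝ := ⇑(hherm.eigenvectorBasis i) with hv
    have hnorm : v ⬝ᵥ v = 1 := by
      have h1 : ‖hherm.eigenvectorBasis i‖ = 1 := hherm.eigenvectorBasis.orthonormal.1 i
      have h2 : (inner ℝ (hherm.eigenvectorBasis i) (hherm.eigenvectorBasis i) : ℝ)
          = v ⬝ᵥ v := by
        rw [EuclideanSpace.inner_eq_star_dotProduct]
        simp [dotProduct, hv, mul_comm]
      rw [← h2, real_inner_self_eq_norm_sq, h1]; norm_num
    have hmv : A.mulVec v ⬝ᵥ v = hherm.eigenvalues i := by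
      rw [show A.mulVec v = hherm.eigenvalues i • v from hherm.mulVec_eigenvectorBasis i,
        smul_dotProduct, hnorm]
      simp
    have := h v
    rw [hmv, hnorm] at this
    simpa using this
  have hdet_lb : m' ^ n ≤ A.det := by
    have := hherm.det_eq_prod_eigenvalues
    rw [this]
    calc m' ^ n = ∏ _i : Fin n, m' := by simp
    _ ≤ ∏ i, hherm.eigenvalues i :=
      Finset.prod_le_prod (fun i _ => hm.le) (fun i _ => (heig i).1)
  have hdet_ub : A.det ≤ M' ^ n := by
    rw [hherm.det_eq_prod_eigenvalues]
    calc ∏ i, hherm.eigenvalues i ≤ ∏ _i : Fin n, M' :=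
      Finset.prod_le_prod (fun i _ => le_trans hm.le (heig i).1) (fun i _ => (heig i).2)
    _ = M' ^ n := by simp
  have hdet_pos : 0 < A.det := lt_of_lt_of_le (pow_pos hm n) hdet_lb
  have hunit : IsUnit A.det := isUnit_iff_ne_zero.2 hdet_pos.ne'
  have hadj : A.adjugate = A.det • A⁻¹ := by
    rw [Matrix.inv_def, smul_smul, Ring.inverse_eq_inv, mul_inv_cancel₀ hdet_pos.ne', one_smul]
  intro z
  set w : Fin n → ℝ := A⁻¹.mulVec z with hw
  have hAw : A.mulVec w = z := by
    rw [hw, mulVec_mulVec, Matrix.mul_nonsing_inv A hunit, one_mulVec]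
  have hexpr : A.adjugate.mulVec z ⬝ᵥ z = A.det * (w ⬝ᵥ z) := by
    rw [hadj, smul_mulVec, smul_dotProduct, smul_eq_mul, hw]
  have hwz_eq : w ⬝ᵥ z = A.mulVec w ⬝ᵥ w := by
    rw [hAw, dotProduct_comm]
  have hwz_nn : 0 ≤ w ⬝ᵥ z := hwz_eq ▸ hpsd w
  -- lower bound : (z⬝z)^2 ≤ (w⬝z) * M' * (z⬝z)
  have hcs1 := psd_cauchy_schwarz A hA hpsd w z
  rw [hAw] at hcs1
  have hub2 := (h z).2
  have hlow : (z ⬝ᵥ z) / M' ≤ w ⬝ᵥ z := by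
    rcases eq_or_lt_of_le (hdotnn z) with hz0 | hzpos
    · have hz : z = 0 := dotProduct_self_eq_zero.1 hz0.symm
      simp [hz]
    · have key : (z ⬝ᵥ z) * (z ⬝ᵥ z) ≤ (w ⬝ᵥ z) * (M' * (z ⬝ᵥ z)) := by
        calc (z ⬝ᵥ z) * (z ⬝ᵥ z) = (z ⬝ᵥ z) ^ 2 := by ring
        _ ≤ (A.mulVec w ⬝ᵥ w) * (A.mulVec z ⬝ᵥ z) := by rw [hAw]; exact hcs1
        _ ≤ (w ⬝ᵥ z) * (M' * (z ⬝ᵥ z)) := by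
            rw [← hwz_eq]
            exact mul_le_mul_of_nonneg_left hub2 hwz_nn
      rw [div_le_iff₀ hM]
      nlinarith [key]
  -- upper bound : w⬝z ≤ (z⬝z)/m'
  have hcs2 : (z ⬝ᵥ w) ^ 2 ≤ (z ⬝ᵥ z) * (w ⬝ᵥ w) := by
    have := psd_cauchy_schwarz (1 : Matrix (Fin n) (Fin n) ℝ)
      (Matrix.isSymm_one) (fun x => by rw [one_mulVec]; exact hdotnn x) z w
    simpa [one_mulVec] using this
  have hww : m' * (w ⬝ᵥ w) ≤ w ⬝ᵥ z := by
    rw [hwz_eq]; exact (h w).1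
  have hup : w ⬝ᵥ z ≤ (z ⬝ᵥ z) / m' := by
    rcases eq_or_lt_of_le hwz_nn with hz0 | hzpos
    · rw [← hz0]; exact div_nonneg (hdotnn z) hm.le
    · rw [le_div_iff₀ hm]
      have hzw2 : (w ⬝ᵥ z) ^ 2 ≤ (z ⬝ᵥ z) * (w ⬝ᵥ w) := by
        rwa [dotProduct_comm z w] at hcs2
      nlinarith [hzw2, hww, hzpos, hdotnn z]
  constructor
  · rw [hexpr]
    calc (m' ^ n / M') * (z ⬝ᵥ z) = m' ^ n * ((z ⬝ᵥ z) / M') := by ring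
    _ ≤ A.det * (w ⬝ᵥ z) :=
      mul_le_mul hdet_lb hlow (div_nonneg (hdotnn z) hM.le) hdet_pos.le
  · rw [hexpr]
    calc A.det * (w ⬝ᵥ z) ≤ M' ^ n * ((z ⬝ᵥ z) / m') :=
      mul_le_mul hdet_ub hup hwz_nn (by positivity)
    _ = (M' ^ n / m') * (z ⬝ᵥ z) := by ring
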